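/- Let η > 0. For every h ∈ L²(ℝ;ℂ), the function G(x) = χ_{[0,∞)}(x) e^{η x} ∫_{x}^{+∞} e^{-η|s|} h(s) ds satisfies ‖G‖_{L²(ℝ)} + ‖G‖_{L^∞(ℝ)} ≤ C ‖h‖_{L²(ℝ)} with a constant C depending only on η. -/

import Mathlib

open MeasureTheory

/-- `G(x) = χ_{[0,∞)}(x) e^{η x} ∫_x^{+∞} e^{-η|s|} h(s) ds`. -/
noncomputable def kernelG (η : ℝ) (h : ℝ → ℂ) (x : ℝ) : ℂ :=
  Set.indicator (Set.Ici (0 : ℝ))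
    (fun x => (Real.exp (η * x) : ℂ) *
      ∫ s in Set.Ioi x, (Real.exp (-η * |s|) : ℂ) * h s) x

open Set ENNReal Filter

private lemma lintA {η : ℝ} (hη : 0 < η) (c : ℝ) :
    ∫⁻ s in Set.Ioi c, ENNReal.ofReal (Real.exp (-η * s)) =
      ENNReal.ofReal (Real.exp (-η * c) / η) := by
  rw [← ofReal_integral_eq_lintegral_ofReal (exp_neg_integrableOn_Ioi c hη)
      (ae_of_all _ fun s => (Real.exp_pos _).le)]
  congr 1
  have h1 : (∫ s in Ioi c, Real.exp (-η * s)) = ∫ s in Ioi c, (fun u => Real.exp (-u)) (η * s) := by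
    simp [neg_mul]
  rw [h1, integral_comp_mul_left_Ioi (fun u => Real.exp (-u)) c hη, integral_exp_neg_Ioi,
    smul_eq_mul, neg_mul]
  ring

private lemma lintB {η : ℝ} (hη : 0 < η) (c : ℝ) :
    ∫⁻ x in Set.Iio c, ENNReal.ofReal (Real.exp (η * x)) =
      ENNReal.ofReal (Real.exp (η * c) / η) := by
  have hemb : MeasurableEmbedding (fun x : ℝ => -x) :=
    (Homeomorph.neg ℝ).isClosedEmbedding.measurableEmbedding
  have hpre : (fun x : ℝ => -x) ⁻¹' (Set.Ioi (-c)) = Set.Iio c := by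
    ext y; simp
  have key := (Measure.measurePreserving_neg (volume : Measure ℝ)).setLIntegral_comp_emb hemb
      (fun y => ENNReal.ofReal (Real.exp (-η * y))) (Set.Iio c)
  have himg : (Neg.neg '' Set.Iio c : Set ℝ) = Set.Ioi (-c) := by
    ext y
    simp only [Set.mem_image, Set.mem_Iio, Set.mem_Ioi]
    constructor
    · rintro ⟨z, hz, rfl⟩; exact neg_lt_neg hz
    · intro hy; exact ⟨-y, by linarith, neg_neg y⟩
  rw [himg] at key
  have h2 : ∀ x : ℝ, ENNReal.ofReal (Real.exp (-η * (-x))) = ENNReal.ofReal (Real.exp (η * x)) := by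
    intro x; congr 2; ring
  rw [← lintegral_congr h2, key, lintA hη (-c)]
  congr 1
  ring_nf

private lemma hec (t : ℝ) : (‖(Real.exp t : ℂ)‖₊ : ℝ≥0∞) = ENNReal.ofReal (Real.exp t) := by
  rw [← enorm_eq_nnnorm, ← ofReal_norm]
  congr 1
  rw [Complex.norm_real, Real.norm_eq_abs, abs_of_pos (Real.exp_pos t)]

private lemma kernelG_sq_le {η : ℝ} (hη : 0 < η) {h : ℝ → ℂ} (hmeas : Measurable h)
    {x : ℝ} (hx : 0 ≤ x) :
    (‖kernelG η h x‖₊ : ℝ≥0∞) ^ (2:ℝ) ≤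
      ENNReal.ofReal (Real.exp (η * x) / η) *
        ∫⁻ s in Set.Ioi x, ENNReal.ofReal (Real.exp (-η * s)) * (‖h s‖₊ : ℝ≥0∞) ^ (2:ℝ) := by
  set B := ∫⁻ s in Set.Ioi x, ENNReal.ofReal (Real.exp (-η * s)) * (‖h s‖₊ : ℝ≥0∞) ^ (2:ℝ)
    with hBdef
  set a : ℝ → ℝ≥0∞ := fun s => ENNReal.ofReal (Real.exp (-(η/2) * s)) with hadef
  have hameas : Measurable a :=
    (Real.continuous_exp.comp (continuous_const.mul continuous_id)).measurable.ennreal_ofReal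
  have hgmeas : Measurable fun s => (‖h s‖₊ : ℝ≥0∞) := hmeas.enorm
  have ha2 : ∀ s : ℝ, a s ^ (2:ℝ) = ENNReal.ofReal (Real.exp (-η * s)) := by
    intro s
    rw [hadef, ENNReal.ofReal_rpow_of_nonneg (Real.exp_pos _).le (by norm_num), ← Real.exp_mul]
    congr 2
    ring
  have step1 : (‖kernelG η h x‖₊ : ℝ≥0∞) ≤
      ENNReal.ofReal (Real.exp (η * x)) *
        ∫⁻ s in Set.Ioi x, ENNReal.ofReal (Real.exp (-η * s)) * (‖h s‖₊ : ℝ≥0∞) := by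
    rw [kernelG, Set.indicator_of_mem (show x ∈ Set.Ici (0:ℝ) from hx), nnnorm_mul, ENNReal.coe_mul, hec]
    gcongr
    refine le_trans (enorm_integral_le_lintegral_enorm _) (le_of_eq ?_)
    refine setLIntegral_congr_fun measurableSet_Ioi (fun s hs => ?_)
    have habs : |s| = s := abs_of_pos (lt_of_le_of_lt hx hs)
    rw [habs, enorm_eq_nnnorm, nnnorm_mul, ENNReal.coe_mul, hec]
  have conj : (2:ℝ).HolderConjugate 2 := Real.HolderConjugate.two_two
  have hsplit : ∀ s : ℝ, ENNReal.ofReal (Real.exp (-η * s)) * (‖h s‖₊ : ℝ≥0∞)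
      = (a * fun s => a s * (‖h s‖₊ : ℝ≥0∞)) s := by
    intro s
    simp only [Pi.mul_apply, hadef]
    have harg : -η * s = -(η/2) * s + -(η/2) * s := by ring
    rw [harg, Real.exp_add, ENNReal.ofReal_mul (Real.exp_pos _).le, mul_assoc]
  have CS := ENNReal.lintegral_mul_le_Lp_mul_Lq ((volume : Measure ℝ).restrict (Set.Ioi x)) conj
      hameas.aemeasurable (hameas.mul hgmeas).aemeasurable
  have haa : ∫⁻ s in Set.Ioi x, a s ^ (2:ℝ) = ENNReal.ofReal (Real.exp (-η * x) / η) := by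
    rw [lintegral_congr ha2, lintA hη x]
  have hag : ∫⁻ s in Set.Ioi x, (a s * (‖h s‖₊ : ℝ≥0∞)) ^ (2:ℝ) = B := by
    rw [hBdef]
    refine lintegral_congr fun s => ?_
    rw [ENNReal.mul_rpow_of_nonneg _ _ (by norm_num : (0:ℝ) ≤ 2), ha2 s]
  have step2 : (∫⁻ s in Set.Ioi x, ENNReal.ofReal (Real.exp (-η * s)) * (‖h s‖₊ : ℝ≥0∞)) ≤
      ENNReal.ofReal (Real.exp (-η * x) / η) ^ (1/2 : ℝ) * B ^ (1/2 : ℝ) := by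
    rw [lintegral_congr hsplit]
    refine le_trans CS (le_of_eq ?_)
    rw [haa, ← hag]
    rfl
  have step3 : (‖kernelG η h x‖₊ : ℝ≥0∞) ≤
      ENNReal.ofReal (Real.exp (η * x)) *
        (ENNReal.ofReal (Real.exp (-η * x) / η) ^ (1/2 : ℝ) * B ^ (1/2 : ℝ)) :=
    le_trans step1 (mul_le_mul_right step2 _)
  calc (‖kernelG η h x‖₊ : ℝ≥0∞) ^ (2:ℝ)
      ≤ (ENNReal.ofReal (Real.exp (η * x)) *
          (ENNReal.ofReal (Real.exp (-η * x) / η) ^ (1/2 : ℝ) * B ^ (1/2 : ℝ))) ^ (2:ℝ) :=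
        ENNReal.rpow_le_rpow step3 (by norm_num)
    _ = ENNReal.ofReal (Real.exp (η * x)) ^ (2:ℝ) *
          (ENNReal.ofReal (Real.exp (-η * x) / η) * B) := by
        rw [ENNReal.mul_rpow_of_nonneg _ _ (by norm_num : (0:ℝ) ≤ 2),
          ENNReal.mul_rpow_of_nonneg _ _ (by norm_num : (0:ℝ) ≤ 2),
          ← ENNReal.rpow_mul, ← ENNReal.rpow_mul]
        norm_num
    _ = ENNReal.ofReal (Real.exp (η * x) / η) * B := by
        rw [← mul_assoc]
        congr 1
        rw [ENNReal.ofReal_rpow_of_nonneg (Real.exp_pos _).le (by norm_num : (0:ℝ) ≤ 2),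
          ← ENNReal.ofReal_mul (by positivity), ← Real.exp_mul]
        congr 1
        rw [div_eq_mul_inv, div_eq_mul_inv, ← mul_assoc, ← Real.exp_add]
        congr 2
        ring

theorem kernelG_L2_Linfty_bound (η : ℝ) (hη : 0 < η) :
    ∃ C > 0, ∀ h : ℝ → ℂ, MemLp h 2 (volume : Measure ℝ) →
      eLpNorm (kernelG η h) 2 volume + eLpNorm (kernelG η h) ⊤ volume
        ≤ ENNReal.ofReal C * eLpNorm h 2 volume := by
  refine ⟨η⁻¹ + (Real.sqrt η)⁻¹, by positivity, ?_⟩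
  intro h hm
  -- replace h by a measurable representative
  set h' : ℝ → ℂ := hm.1.mk h with hh'
  have hmeas : Measurable h' := hm.1.stronglyMeasurable_mk.measurable
  have hae : h =ᵐ[volume] h' := hm.1.ae_eq_mk
  have hker : kernelG η h = kernelG η h' := by
    funext x
    unfold kernelG
    have hfun : (fun y : ℝ => (Real.exp (η*y) : ℂ) *
          ∫ s in Set.Ioi y, (Real.exp (-η*|s|) : ℂ) * h s)
        = fun y => (Real.exp (η*y) : ℂ) *
          ∫ s in Set.Ioi y, (Real.exp (-η*|s|) : ℂ) * h' s := by
      funext y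
      congr 1
      exact integral_congr_ae (ae_restrict_of_ae (hae.mono fun s hs => by dsimp only; rw [hs]))
    rw [hfun]
  have hN : eLpNorm h 2 volume = eLpNorm h' 2 volume := eLpNorm_congr_ae hae
  rw [hker, hN]
  set N := eLpNorm h' 2 volume with hNdef
  set I := ∫⁻ s, (‖h' s‖₊ : ℝ≥0∞) ^ (2:ℝ) with hIdef
  have hNI : N = I ^ (1/2 : ℝ) := by
    rw [hNdef, hIdef, eLpNorm_eq_lintegral_rpow_enorm_toReal (by norm_num) (by norm_num)]
    norm_num
    rfl
  set J := ENNReal.ofReal η⁻¹ with hJdef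
  set g : ℝ → ℝ≥0∞ := fun s => ENNReal.ofReal (Real.exp (-η * s)) * (‖h' s‖₊ : ℝ≥0∞) ^ (2:ℝ)
    with hgdef
  have hgmeas : Measurable g := by
    apply Measurable.mul
    · exact (Real.continuous_exp.comp (continuous_const.mul continuous_id)).measurable.ennreal_ofReal
    · exact hmeas.enorm.pow_const _
  -- L∞ bound
  have hsup : eLpNorm (kernelG η h') ⊤ volume ≤ ENNReal.ofReal (Real.sqrt η)⁻¹ * N := by
    have hb : ∀ x : ℝ, (‖kernelG η h' x‖₊ : ℝ≥0∞) ≤ (J * I) ^ (1/2 : ℝ) := by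
      intro x
      by_cases hx : (0:ℝ) ≤ x
      · have hB : (∫⁻ s in Set.Ioi x, g s) ≤ ENNReal.ofReal (Real.exp (-η * x)) * I := by
          have h1 : (∫⁻ s in Set.Ioi x, g s) ≤
              ∫⁻ s in Set.Ioi x, ENNReal.ofReal (Real.exp (-η * x)) * (‖h' s‖₊ : ℝ≥0∞) ^ (2:ℝ) := by
            refine lintegral_mono_ae ((ae_restrict_iff' measurableSet_Ioi).2
              (ae_of_all _ fun s hs => ?_))
            simp only [hgdef]
            refine mul_le_mul_left (ENNReal.ofReal_le_ofReal (Real.exp_le_exp.2 ?_)) _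
            have hxs : x < s := hs
            nlinarith
          refine h1.trans ?_
          rw [lintegral_const_mul (f := fun s => (‖h' s‖₊ : ℝ≥0∞) ^ (2:ℝ)) _ (hmeas.enorm.pow_const _)]
          exact mul_le_mul_right (setLIntegral_le_lintegral _ _) _
        have h2 : (‖kernelG η h' x‖₊ : ℝ≥0∞) ^ (2:ℝ) ≤ J * I := by
          refine le_trans (kernelG_sq_le hη hmeas hx) ?_
          refine le_trans (mul_le_mul_right hB _) ?_
          rw [← mul_assoc, ← ENNReal.ofReal_mul (by positivity)]
          apply mul_le_mul_left
          rw [hJdef]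
          apply ENNReal.ofReal_le_ofReal
          rw [div_mul_eq_mul_div, ← Real.exp_add]
          have : η * x + -η * x = 0 := by ring
          rw [this, Real.exp_zero]
          rw [one_div]
        calc (‖kernelG η h' x‖₊ : ℝ≥0∞)
            = ((‖kernelG η h' x‖₊ : ℝ≥0∞) ^ (2:ℝ)) ^ (1/2 : ℝ) := by
              rw [← ENNReal.rpow_mul]; norm_num
          _ ≤ (J * I) ^ (1/2 : ℝ) := ENNReal.rpow_le_rpow h2 (by norm_num)
      · rw [kernelG, Set.indicator_of_notMem (show x ∉ Set.Ici (0:ℝ) from hx)]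
        simp
    have hJI : (J * I) ^ (1/2 : ℝ) = ENNReal.ofReal (Real.sqrt η)⁻¹ * N := by
      rw [ENNReal.mul_rpow_of_nonneg _ _ (by norm_num : (0:ℝ) ≤ 1/2), ← hNI]
      congr 1
      rw [hJdef, ENNReal.ofReal_rpow_of_pos (inv_pos.2 hη)]
      congr 1
      rw [← Real.sqrt_eq_rpow, Real.sqrt_inv]
    rw [eLpNorm_exponent_top]
    refine le_trans (essSup_le_of_ae_le _ (ae_of_all _ hb)) (le_of_eq hJI)
  -- L² bound
  have hL2 : eLpNorm (kernelG η h') 2 volume ≤ J * N := by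
    rw [eLpNorm_eq_lintegral_rpow_enorm_toReal (by norm_num) (by norm_num)]
    have htR : ((2:ℝ≥0∞)).toReal = 2 := by norm_num
    rw [htR]
    have hmain : (∫⁻ x, (‖kernelG η h' x‖₊ : ℝ≥0∞) ^ (2:ℝ)) ≤ J * J * I := by
      set F : ℝ × ℝ → ℝ≥0∞ := Set.indicator {q : ℝ × ℝ | 0 ≤ q.1 ∧ q.1 < q.2}
        (fun q => ENNReal.ofReal (Real.exp (η * q.1) / η) * g q.2) with hFdef
      have hSmeas : MeasurableSet {q : ℝ × ℝ | 0 ≤ q.1 ∧ q.1 < q.2} :=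
        (measurableSet_le measurable_const measurable_fst).inter
          (measurableSet_lt measurable_fst measurable_snd)
      have hFmeas : Measurable F := by
        refine Measurable.indicator ?_ hSmeas
        exact ((Real.continuous_exp.comp (continuous_const.mul continuous_id)).measurable.div_const
          η).ennreal_ofReal.comp measurable_fst |>.mul (hgmeas.comp measurable_snd)
      -- step A : pointwise, ‖G x‖² ≤ ∫⁻ s, F (x, s)
      have hA : ∀ x : ℝ, (‖kernelG η h' x‖₊ : ℝ≥0∞) ^ (2:ℝ) ≤ ∫⁻ s, F (x, s) := by
        intro x
        by_cases hx : (0:ℝ) ≤ x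
        · have hFx : (fun s => F (x, s)) = Set.indicator (Set.Ioi x)
              (fun s => ENNReal.ofReal (Real.exp (η * x) / η) * g s) := by
            funext s
            by_cases hs : x < s
            · rw [hFdef, Set.indicator_of_mem (show (x, s) ∈ {q : ℝ × ℝ | 0 ≤ q.1 ∧ q.1 < q.2}
                from ⟨hx, hs⟩), Set.indicator_of_mem (Set.mem_Ioi.2 hs)]
            · rw [hFdef, Set.indicator_of_notMem (fun hc => hs hc.2),
                Set.indicator_of_notMem (fun hc => hs (Set.mem_Ioi.1 hc))]
          rw [hFx, lintegral_indicator measurableSet_Ioi,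
            lintegral_const_mul _ hgmeas]
          exact kernelG_sq_le hη hmeas hx
        · rw [kernelG, Set.indicator_of_notMem (show x ∉ Set.Ici (0:ℝ) from hx)]
          simp [ENNReal.zero_rpow_of_pos]
      -- step B : for each s, ∫⁻ x, F (x, s) ≤ ofReal (η⁻¹ * η⁻¹) * stuff
      have hBs : ∀ s : ℝ, (∫⁻ x, F (x, s)) ≤ J * J * (‖h' s‖₊ : ℝ≥0∞) ^ (2:ℝ) := by
        intro s
        have hFs : (fun x => F (x, s)) = fun x => Set.indicator (Set.Ico 0 s)
            (fun x => ENNReal.ofReal (Real.exp (η * x) / η)) x * g s := by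
          funext x
          by_cases hx : x ∈ Set.Ico 0 s
          · rw [hFdef, Set.indicator_of_mem (show (x, s) ∈ {q : ℝ × ℝ | 0 ≤ q.1 ∧ q.1 < q.2}
              from ⟨hx.1, hx.2⟩), Set.indicator_of_mem hx]
          · rw [hFdef, Set.indicator_of_notMem (fun hc => hx ⟨hc.1, hc.2⟩),
              Set.indicator_of_notMem hx, zero_mul]
        have hcm : Measurable fun x : ℝ => ENNReal.ofReal (Real.exp (η * x) / η) := by
          fun_prop
        have hicm : Measurable fun x : ℝ => Set.indicator (Set.Ico 0 s)
            (fun x => ENNReal.ofReal (Real.exp (η * x) / η)) x := hcm.indicator measurableSet_Ico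
        rw [hFs, lintegral_mul_const _ hicm]
        have hIco : (∫⁻ x, Set.indicator (Set.Ico 0 s)
            (fun x => ENNReal.ofReal (Real.exp (η * x) / η)) x) ≤ J * ENNReal.ofReal (Real.exp (η * s) / η) := by
          rw [lintegral_indicator measurableSet_Ico]
          refine le_trans (lintegral_mono_set Set.Ico_subset_Iio_self) ?_
          have hfun2 : ∀ x : ℝ, ENNReal.ofReal (Real.exp (η * x) / η)
              = J * ENNReal.ofReal (Real.exp (η * x)) := by
            intro x
            rw [hJdef, ← ENNReal.ofReal_mul (by positivity), div_eq_mul_inv, mul_comm]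
          have hem : Measurable fun x : ℝ => ENNReal.ofReal (Real.exp (η * x)) := by fun_prop
          rw [lintegral_congr hfun2, lintegral_const_mul _ hem, lintB hη s]
        refine le_trans (mul_le_mul_left hIco _) (le_of_eq ?_)
        rw [hgdef]
        simp only []
        rw [mul_assoc, ← mul_assoc (ENNReal.ofReal (Real.exp (η * s) / η)),
          ← ENNReal.ofReal_mul (by positivity)]
        have : Real.exp (η * s) / η * Real.exp (-η * s) = η⁻¹ := by
          rw [div_mul_eq_mul_div, ← Real.exp_add]
          have h0 : η * s + -η * s = 0 := by ring
          rw [h0, Real.exp_zero, one_div]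
        rw [this, ← hJdef, mul_assoc]
      -- assemble via Tonelli
      have hind : ∀ x : ℝ, (‖kernelG η h' x‖₊ : ℝ≥0∞) ^ (2:ℝ) ≤ ∫⁻ s, F (x, s) := hA
      calc (∫⁻ x, (‖kernelG η h' x‖₊ : ℝ≥0∞) ^ (2:ℝ))
          ≤ ∫⁻ x, ∫⁻ s, F (x, s) := lintegral_mono hind
        _ = ∫⁻ s, ∫⁻ x, F (x, s) := by
            refine lintegral_lintegral_swap ?_
            exact hFmeas.aemeasurable
        _ ≤ ∫⁻ s, J * J * (‖h' s‖₊ : ℝ≥0∞) ^ (2:ℝ) := lintegral_mono hBs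
        _ = J * J * I := by rw [lintegral_const_mul (f := fun s => (‖h' s‖₊ : ℝ≥0∞) ^ (2:ℝ)) _ (hmeas.enorm.pow_const _), hIdef]
    calc (∫⁻ x, (‖kernelG η h' x‖₊ : ℝ≥0∞) ^ (2:ℝ)) ^ (1/(2:ℝ))
        ≤ (J * J * I) ^ (1/(2:ℝ)) := ENNReal.rpow_le_rpow hmain (by norm_num)
      _ = J * N := by
          rw [ENNReal.mul_rpow_of_nonneg _ _ (by norm_num : (0:ℝ) ≤ 1/2), ← hNI]
          congr 1
          have h22 : J ^ (2:ℝ) = J * J := by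
            rw [show (2:ℝ) = ((2:ℕ):ℝ) by norm_num, ENNReal.rpow_natCast]
            ring
          rw [← h22, ← ENNReal.rpow_mul]
          norm_num
  calc eLpNorm (kernelG η h') 2 volume + eLpNorm (kernelG η h') ⊤ volume
      ≤ J * N + ENNReal.ofReal (Real.sqrt η)⁻¹ * N := add_le_add hL2 hsup
    _ = ENNReal.ofReal (η⁻¹ + (Real.sqrt η)⁻¹) * N := by
        rw [ENNReal.ofReal_add (by positivity) (by positivity), add_mul, hJdef]
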